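/- Let A, B ∈ ℂ^{n×n}, let ξ_1,…,ξ_{k−1} ∈ ℂ be such that each A − ξ_i B is invertible, let v ∈ ℂ^n be nonzero, and let ϱ_1,…,ϱ_{k−1} and ϱ̌ be scalars all different from every ξ_j. Then the subspaces span{v, M(ϱ_1,ξ_1)v, M(ϱ_2,ξ_2)M(ϱ_1,ξ_1)v, …, (∏_{i=1}^{k−1} M(ϱ_i,ξ_i))v} and span{v, M(ϱ̌,ξ_1)v, …, (∏_{i=1}^{k−1} M(ϱ̌,ξ_i))v} coincide (nested shift invariance). -/

import Mathlib

open Matrix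

/-- The elementary rational function M(ϱ,ξ) = (A − ϱB)(A − ξB)⁻¹. -/
noncomputable def Mfun {n : ℕ} (A B : Matrix (Fin n) (Fin n) ℂ) (ϱ ξ : ℂ) :
    Matrix (Fin n) (Fin n) ℂ :=
  (A - ϱ • B) * (A - ξ • B)⁻¹

/-- The ordered product ∏_{i=1}^{j} M(ϱᵢ, ξᵢ) of elementary rational functions. -/
noncomputable def prodM {n : ℕ} (A B : Matrix (Fin n) (Fin n) ℂ) (ϱ ξ : ℕ → ℂ)
    (j : ℕ) : Matrix (Fin n) (Fin n) ℂ :=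
  ((List.range j).map fun i => Mfun A B (ϱ i) (ξ i)).prod

namespace NSI

open Polynomial

variable {n : ℕ} (A B : Matrix (Fin n) (Fin n) ℂ)

noncomputable def Sr (ξ : ℂ) : Matrix (Fin n) (Fin n) ℂ := B * (A - ξ • B)⁻¹

noncomputable def SS (ξ : ℕ → ℂ) (m : ℕ) : Matrix (Fin n) (Fin n) ℂ :=
  ((List.range m).map fun i => Sr A B (ξ i)).prod

lemma SS_zero (ξ : ℕ → ℂ) : SS A B ξ 0 = 1 := by simp [SS]

lemma SS_succ (ξ : ℕ → ℂ) (m : ℕ) : SS A B ξ (m+1) = SS A B ξ m * Sr A B (ξ m) := by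
  simp [SS, List.range_succ]

lemma prodM_zero (ϱ ξ : ℕ → ℂ) : prodM A B ϱ ξ 0 = 1 := by simp [prodM]

lemma prodM_succ (ϱ ξ : ℕ → ℂ) (j : ℕ) :
    prodM A B ϱ ξ (j+1) = prodM A B ϱ ξ j * Mfun A B (ϱ j) (ξ j) := by
  simp [prodM, List.range_succ]

lemma Mfun_eq (ϱ ξ : ℂ) (h : IsUnit (A - ξ • B)) :
    Mfun A B ϱ ξ = 1 + (ξ - ϱ) • Sr A B ξ := by
  have hd : IsUnit (A - ξ • B).det := (Matrix.isUnit_iff_isUnit_det _).1 h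
  have h1 : (A - ϱ • B) = (A - ξ • B) + (ξ - ϱ) • B := by
    rw [sub_smul]; abel
  rw [Mfun, h1, add_mul, Matrix.mul_nonsing_inv _ hd, smul_mul_assoc, Sr]

lemma resolvent (ξi ξj : ℂ) (hi : IsUnit (A - ξi • B)) (hj : IsUnit (A - ξj • B)) :
    Sr A B ξj = Sr A B ξi - (ξi - ξj) • (Sr A B ξi * Sr A B ξj) := by
  have hdi : IsUnit (A - ξi • B).det := (Matrix.isUnit_iff_isUnit_det _).1 hi
  have hdj : IsUnit (A - ξj • B).det := (Matrix.isUnit_iff_isUnit_det _).1 hj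
  have h2 : (A - ξj • B) - (A - ξi • B) = (ξi - ξj) • B := by
    rw [sub_smul]; abel
  have key : (A - ξi • B)⁻¹ - (A - ξj • B)⁻¹
      = (ξi - ξj) • ((A - ξi • B)⁻¹ * (B * (A - ξj • B)⁻¹)) := by
    have : (A - ξi • B)⁻¹ * ((A - ξj • B) - (A - ξi • B)) * (A - ξj • B)⁻¹
        = (A - ξi • B)⁻¹ - (A - ξj • B)⁻¹ := by
      rw [Matrix.mul_sub, Matrix.sub_mul, Matrix.nonsing_inv_mul _ hdi, Matrix.mul_assoc,
        Matrix.mul_nonsing_inv _ hdj, Matrix.mul_one, Matrix.one_mul]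
    rw [← this, h2, Matrix.mul_smul, Matrix.smul_mul, Matrix.mul_assoc]
  have : Sr A B ξi - Sr A B ξj = (ξi - ξj) • (Sr A B ξi * Sr A B ξj) := by
    simp only [Sr]
    rw [← Matrix.mul_sub, key, Matrix.mul_smul, Matrix.mul_assoc]
  rw [← this]; abel


lemma keyB (ξ : ℕ → ℂ) (K : ℕ) (hξ : ∀ i, i < K → IsUnit (A - ξ i • B))
    (j : ℕ) (hj : j < K) :
    ∀ d m, m ≤ j → j - m = d →
    ∃ g : ℕ → ℂ, (∀ t, t ≤ m → g t = 0) ∧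
      SS A B ξ m * Sr A B (ξ j) = ∑ t ∈ Finset.range (j+2), g t • SS A B ξ t ∧
      (∏ i ∈ Finset.Ico m j, (X - C (ξ i)))
        = ∑ t ∈ Finset.range (j+2), C (g t) * ∏ i ∈ Finset.Ico t (j+1), (X - C (ξ i)) := by
  intro d
  induction d with
  | zero =>
    intro m hm hd
    have hmj : m = j := by omega
    subst hmj
    refine ⟨fun t => if t = m+1 then 1 else 0, ?_, ?_, ?_⟩
    · intro t ht; simp [Nat.ne_of_lt (by omega : t < m+1)]
    · rw [← SS_succ]
      simp [Finset.sum_ite_eq' (Finset.range (m+2)) (m+1)]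
    · simp [apply_ite C, Finset.sum_ite_eq' (Finset.range (m+2)) (m+1)]
  | succ d ih =>
    intro m hm hd
    have hmj : m < j := by omega
    obtain ⟨g', hg0, hg1, hg2⟩ := ih (m+1) (by omega) (by omega)
    have hres := resolvent A B (ξ m) (ξ j) (hξ m (by omega)) (hξ j hj)
    refine ⟨fun t => (if t = m+1 then 1 else 0) + (ξ j - ξ m) * g' t, ?_, ?_, ?_⟩
    · intro t ht
      have h1 : t ≠ m+1 := by omega
      have h2 : g' t = 0 := hg0 t (by omega)
      simp [h1, h2]
    · have e1 : SS A B ξ m * Sr A B (ξ j)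
          = SS A B ξ (m+1) + (ξ j - ξ m) • (SS A B ξ (m+1) * Sr A B (ξ j)) := by
        conv_lhs => rw [hres]
        rw [Matrix.mul_sub, Matrix.mul_smul, ← Matrix.mul_assoc, ← SS_succ,
          sub_eq_add_neg, ← neg_smul, neg_sub]
      rw [e1, hg1]
      symm
      simp only [add_smul, mul_smul, Finset.sum_add_distrib]
      congr 1
      · simp [Finset.sum_ite_eq' (Finset.range (j+2)) (m+1), (by omega : m+1 < j+2)]
      · rw [Finset.smul_sum]
    · have e2 : (∏ i ∈ Finset.Ico m j, (X - C (ξ i)))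
          = (∏ i ∈ Finset.Ico (m+1) (j+1), (X - C (ξ i)))
            + C (ξ j - ξ m) * ∏ i ∈ Finset.Ico (m+1) j, (X - C (ξ i)) := by
        rw [Finset.prod_eq_prod_Ico_succ_bot hmj, Finset.prod_Ico_succ_top (by omega : m+1 ≤ j)]
        have : (X - C (ξ m)) = (X - C (ξ j)) + C (ξ j - ξ m) := by
          rw [map_sub]; ring
        rw [this]; ring
      rw [e2, hg2]
      symm
      simp only [map_add, _root_.map_mul, add_mul, Finset.sum_add_distrib]
      congr 1
      · simp [apply_ite C, Finset.sum_ite_eq' (Finset.range (j+2)) (m+1),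
          (by omega : m+1 < j+2)]
      · rw [Finset.mul_sum]
        refine Finset.sum_congr rfl fun t _ => ?_
        ring

lemma keyL3 (ϱ ξ : ℕ → ℂ) (K : ℕ) (hξ : ∀ i, i < K → IsUnit (A - ξ i • B)) :
    ∀ j, j ≤ K →
    ∃ e : ℕ → ℂ,
      prodM A B ϱ ξ j = ∑ m ∈ Finset.range (j+1), e m • SS A B ξ m ∧
      (∏ i ∈ Finset.range j, (X - C (ϱ i)))
        = ∑ m ∈ Finset.range (j+1), C (e m) * ∏ i ∈ Finset.Ico m j, (X - C (ξ i)) := by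
  intro j
  induction j with
  | zero =>
    intro _
    refine ⟨fun _ => 1, ?_, ?_⟩ <;> simp [prodM_zero, SS_zero]
  | succ j ihj =>
    intro hj1
    have hjK : j < K := by omega
    obtain ⟨e, he1, he2⟩ := ihj (by omega)
    have hgm : ∀ m : ℕ, ∃ g : ℕ → ℂ, m ≤ j →
        (SS A B ξ m * Sr A B (ξ j) = ∑ t ∈ Finset.range (j+2), g t • SS A B ξ t ∧
         (∏ i ∈ Finset.Ico m j, (X - C (ξ i)))
            = ∑ t ∈ Finset.range (j+2), C (g t) * ∏ i ∈ Finset.Ico t (j+1), (X - C (ξ i))) := by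
      intro m
      by_cases hm : m ≤ j
      · obtain ⟨g, _, h1, h2⟩ := keyB A B ξ K hξ j hjK (j - m) m hm rfl
        exact ⟨g, fun _ => ⟨h1, h2⟩⟩
      · exact ⟨0, fun h => absurd h hm⟩
    choose g hg using hgm
    set d := ξ j - ϱ j with hdd
    refine ⟨fun t => (if t ≤ j then e t else 0)
        + d * ∑ m ∈ Finset.range (j+1), e m * g m t, ?_, ?_⟩
    · -- matrix identity
      have hstep : prodM A B ϱ ξ (j+1)
          = prodM A B ϱ ξ j + d • (prodM A B ϱ ξ j * Sr A B (ξ j)) := by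
        rw [prodM_succ, Mfun_eq A B _ _ (hξ j hjK), mul_add, mul_one, Matrix.mul_smul]
      have hps : prodM A B ϱ ξ j * Sr A B (ξ j)
          = ∑ t ∈ Finset.range (j+2),
              (∑ m ∈ Finset.range (j+1), e m * g m t) • SS A B ξ t := by
        rw [he1, Finset.sum_mul]
        have hterm : ∀ m ∈ Finset.range (j+1),
            (e m • SS A B ξ m) * Sr A B (ξ j)
              = ∑ t ∈ Finset.range (j+2), (e m * g m t) • SS A B ξ t := by
          intro m hm
          have hm' : m ≤ j := by have := Finset.mem_range.mp hm; omega
          rw [Matrix.smul_mul, (hg m hm').1, Finset.smul_sum]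
          exact Finset.sum_congr rfl fun t _ => (smul_smul _ _ _)
        rw [Finset.sum_congr rfl hterm, Finset.sum_comm]
        exact Finset.sum_congr rfl fun t _ => (Finset.sum_smul).symm
      have htrunc : ∑ t ∈ Finset.range (j+2), (if t ≤ j then e t else 0) • SS A B ξ t
          = ∑ t ∈ Finset.range (j+1), e t • SS A B ξ t := by
        rw [Finset.range_add_one (n := j+1), Finset.sum_insert (by simp), if_neg (by omega),
          zero_smul, zero_add]
        exact Finset.sum_congr rfl fun t ht => by
          have := Finset.mem_range.mp ht
          rw [if_pos (by omega)]
      rw [hstep, hps, he1]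
      symm
      simp only [add_smul, mul_smul, Finset.sum_add_distrib]
      rw [htrunc, Finset.smul_sum]
    · -- polynomial identity
      have hstep : (∏ i ∈ Finset.range (j+1), (X - C (ϱ i)))
          = (∏ i ∈ Finset.range j, (X - C (ϱ i))) * (X - C (ξ j))
            + C d * ∏ i ∈ Finset.range j, (X - C (ϱ i)) := by
        rw [Finset.prod_range_succ]
        have hx : (X - C (ϱ j)) = (X - C (ξ j)) + C d := by
          rw [hdd, map_sub]; ring
        rw [hx]; ring
      have h1 : (∏ i ∈ Finset.range j, (X - C (ϱ i))) * (X - C (ξ j))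
          = ∑ m ∈ Finset.range (j+1), C (e m) * ∏ i ∈ Finset.Ico m (j+1), (X - C (ξ i)) := by
        rw [he2, Finset.sum_mul]
        refine Finset.sum_congr rfl fun m hm => ?_
        have hm' : m ≤ j := by have := Finset.mem_range.mp hm; omega
        rw [Finset.prod_Ico_succ_top hm', mul_assoc]
      have h2 : C d * (∏ i ∈ Finset.range j, (X - C (ϱ i)))
          = ∑ t ∈ Finset.range (j+2),
              C (d * ∑ m ∈ Finset.range (j+1), e m * g m t)
                * ∏ i ∈ Finset.Ico t (j+1), (X - C (ξ i)) := by
        rw [he2, Finset.mul_sum]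
        have hterm : ∀ m ∈ Finset.range (j+1),
            C d * (C (e m) * ∏ i ∈ Finset.Ico m j, (X - C (ξ i)))
              = ∑ t ∈ Finset.range (j+2),
                  C (d * (e m * g m t)) * ∏ i ∈ Finset.Ico t (j+1), (X - C (ξ i)) := by
          intro m hm
          have hm' : m ≤ j := by have := Finset.mem_range.mp hm; omega
          rw [(hg m hm').2, Finset.mul_sum, Finset.mul_sum]
          refine Finset.sum_congr rfl fun t _ => ?_
          simp only [_root_.map_mul]; ring
        rw [Finset.sum_congr rfl hterm, Finset.sum_comm]
        refine Finset.sum_congr rfl fun t _ => ?_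
        rw [← Finset.sum_mul]
        congr 1
        rw [Finset.mul_sum, map_sum]
      have htrunc : ∑ t ∈ Finset.range (j+2),
            C (if t ≤ j then e t else 0) * ∏ i ∈ Finset.Ico t (j+1), (X - C (ξ i))
          = ∑ m ∈ Finset.range (j+1), C (e m) * ∏ i ∈ Finset.Ico m (j+1), (X - C (ξ i)) := by
        rw [Finset.range_add_one (n := j+1), Finset.sum_insert (by simp), if_neg (by omega),
          map_zero, zero_mul, zero_add]
        exact Finset.sum_congr rfl fun t ht => by
          have := Finset.mem_range.mp ht
          rw [if_pos (by omega)]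
      rw [hstep, h1, h2]
      symm
      simp only [map_add, add_mul, Finset.sum_add_distrib]
      rw [htrunc]

lemma exists_expansion (ϱ ξ : ℕ → ℂ) (K : ℕ) (hξ : ∀ i, i < K → IsUnit (A - ξ i • B))
    (hϱ : ∀ i t, i < K → t < K → ϱ i ≠ ξ t) (j : ℕ) (hj : j ≤ K) :
    ∃ e : ℕ → ℂ,
      prodM A B ϱ ξ j = ∑ m ∈ Finset.range (j+1), e m • SS A B ξ m ∧ e j ≠ 0 := by
  obtain ⟨e, he1, he2⟩ := keyL3 A B ϱ ξ K hξ j hj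
  refine ⟨e, he1, ?_⟩
  rcases Nat.eq_zero_or_pos j with hj0 | hj0
  · subst hj0
    have h := congrArg (Polynomial.eval 0) he2
    simp at h
    intro h0
    rw [h0] at h
    simp at h
  · set z := ξ (j-1) with hz
    have h := congrArg (Polynomial.eval z) he2
    have hR : Polynomial.eval z
        (∑ m ∈ Finset.range (j+1), C (e m) * ∏ i ∈ Finset.Ico m j, (X - C (ξ i))) = e j := by
      rw [Polynomial.eval_finset_sum, Finset.sum_range_succ]
      have hzero : ∀ m ∈ Finset.range j,
          Polynomial.eval z (C (e m) * ∏ i ∈ Finset.Ico m j, (X - C (ξ i))) = 0 := by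
        intro m hm
        have hmj : m < j := Finset.mem_range.mp hm
        rw [Polynomial.eval_mul, Polynomial.eval_prod]
        have hmem : j - 1 ∈ Finset.Ico m j := Finset.mem_Ico.mpr ⟨by omega, by omega⟩
        rw [Finset.prod_eq_zero hmem (by simp [hz]), mul_zero]
      rw [Finset.sum_eq_zero hzero, zero_add]
      simp
    have hL : Polynomial.eval z (∏ i ∈ Finset.range j, (X - C (ϱ i)))
        = ∏ i ∈ Finset.range j, (z - ϱ i) := by
      rw [Polynomial.eval_prod]
      exact Finset.prod_congr rfl fun i _ => by simp
    rw [hL, hR] at h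
    rw [← h]
    rw [Finset.prod_ne_zero_iff]
    intro i hi
    have hi' : i < j := Finset.mem_range.mp hi
    have hne := hϱ i (j-1) (by omega) (by omega)
    intro hzero
    exact hne (by rw [← sub_eq_zero]; rw [sub_eq_zero] at hzero; rw [← hzero]; simp [hz])

lemma sum_smul_mulVec (s : Finset ℕ) (c : ℕ → ℂ) (M : ℕ → Matrix (Fin n) (Fin n) ℂ)
    (v : Fin n → ℂ) :
    (∑ m ∈ s, c m • M m) *ᵥ v = ∑ m ∈ s, c m • (M m *ᵥ v) := by
  induction s using Finset.induction with
  | empty => simp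
  | insert a s h ih => simp [Finset.sum_insert h, Matrix.add_mulVec, Matrix.smul_mulVec, ih]

lemma span_eq_of_triangular (u w : ℕ → (Fin n → ℂ)) (k : ℕ)
    (h : ∀ j, j < k → ∃ e : ℕ → ℂ,
      u j = ∑ m ∈ Finset.range (j+1), e m • w m ∧ e j ≠ 0) :
    ∀ t, t ≤ k → Submodule.span ℂ (((Finset.range t).image u : Finset (Fin n → ℂ)) : Set (Fin n → ℂ))
      = Submodule.span ℂ (((Finset.range t).image w : Finset (Fin n → ℂ)) : Set (Fin n → ℂ)) := by
  intro t
  induction t with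
  | zero => intro _; simp
  | succ t iht =>
    intro ht
    have IH := iht (by omega)
    obtain ⟨e, heq, hne⟩ := h t (by omega)
    rw [Finset.range_add_one, Finset.image_insert, Finset.image_insert, Finset.coe_insert,
      Finset.coe_insert, Submodule.span_insert, Submodule.span_insert, IH]
    have hsum : ∑ m ∈ Finset.range t, e m • w m
        ∈ Submodule.span ℂ (((Finset.range t).image w : Finset (Fin n → ℂ)) : Set (Fin n → ℂ)) := by
      refine Submodule.sum_mem _ fun m hm => Submodule.smul_mem _ _ (Submodule.subset_span ?_)
      exact Finset.mem_coe.mpr (Finset.mem_image_of_mem w hm)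
    have heq' : u t = ∑ m ∈ Finset.range t, e m • w m + e t • w t := by
      rw [heq, Finset.sum_range_succ]
    apply le_antisymm
    · apply sup_le
      · rw [Submodule.span_singleton_le_iff_mem, heq']
        apply Submodule.add_mem
        · exact Submodule.mem_sup_right hsum
        · exact Submodule.smul_mem _ _
            (Submodule.mem_sup_left (Submodule.mem_span_singleton_self _))
      · exact le_sup_right
    · apply sup_le
      · rw [Submodule.span_singleton_le_iff_mem]
        have hw : w t = (e t)⁻¹ • (u t - ∑ m ∈ Finset.range t, e m • w m) := by
          rw [heq', add_sub_cancel_left, smul_smul, inv_mul_cancel₀ hne, one_smul]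
        rw [hw]
        apply Submodule.smul_mem
        apply Submodule.sub_mem
        · exact Submodule.mem_sup_left (Submodule.mem_span_singleton_self _)
        · exact Submodule.mem_sup_right hsum
      · exact le_sup_right

end NSI

lemma range_fin_eq {α : Type*} (F : ℕ → α) (k : ℕ) [DecidableEq α] :
    (Set.range fun j : Fin k => F j) = ↑((Finset.range k).image F) := by
  ext x
  simp [Fin.exists_iff, eq_comm]


/-- Nested shift invariance: the rational Krylov subspace
span{v, M(ϱ₁,ξ₁)v, …, ∏ M(ϱᵢ,ξᵢ) v} is independent of the choice of shifts. -/
theorem nested_shift_invariance {n : ℕ}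
    (A B : Matrix (Fin n) (Fin n) ℂ) (k : ℕ)
    (ξ ϱ : ℕ → ℂ) (ϱ' : ℂ)
    (hξ : ∀ i, i < k - 1 → IsUnit (A - ξ i • B))
    (hϱ : ∀ i j, i < k - 1 → j < k - 1 → ϱ i ≠ ξ j)
    (hϱ' : ∀ j, j < k - 1 → ϱ' ≠ ξ j)
    (v : Fin n → ℂ) (hv : v ≠ 0) :
    Submodule.span ℂ (Set.range fun j : Fin k => (prodM A B ϱ ξ j).mulVec v) =
      Submodule.span ℂ
        (Set.range fun j : Fin k => (prodM A B (fun _ => ϱ') ξ j).mulVec v) := by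
  classical
  have h1 : ∀ j, j < k → ∃ e : ℕ → ℂ,
      (prodM A B ϱ ξ j).mulVec v
        = ∑ m ∈ Finset.range (j+1), e m • ((NSI.SS A B ξ m).mulVec v) ∧ e j ≠ 0 := by
    intro j hj
    obtain ⟨e, he, hne⟩ := NSI.exists_expansion A B ϱ ξ (k-1) hξ
      (fun i t hi ht => hϱ i t hi ht) j (by omega)
    exact ⟨e, by rw [he, NSI.sum_smul_mulVec], hne⟩
  have h2 : ∀ j, j < k → ∃ e : ℕ → ℂ,
      (prodM A B (fun _ => ϱ') ξ j).mulVec v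
        = ∑ m ∈ Finset.range (j+1), e m • ((NSI.SS A B ξ m).mulVec v) ∧ e j ≠ 0 := by
    intro j hj
    obtain ⟨e, he, hne⟩ := NSI.exists_expansion A B (fun _ => ϱ') ξ (k-1) hξ
      (fun i t _ ht => hϱ' t ht) j (by omega)
    exact ⟨e, by rw [he, NSI.sum_smul_mulVec], hne⟩
  have s1 := NSI.span_eq_of_triangular (fun j => (prodM A B ϱ ξ j).mulVec v)
    (fun m => (NSI.SS A B ξ m).mulVec v) k h1 k le_rfl
  have s2 := NSI.span_eq_of_triangular (fun j => (prodM A B (fun _ => ϱ') ξ j).mulVec v)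
    (fun m => (NSI.SS A B ξ m).mulVec v) k h2 k le_rfl
  rw [range_fin_eq (fun j => (prodM A B ϱ ξ j).mulVec v) k,
    range_fin_eq (fun j => (prodM A B (fun _ => ϱ') ξ j).mulVec v) k]
  exact s1.trans s2.symm
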